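/- Let A and B be groups with a common finite subgroup K of index 2 in each, let G = A ∗_K B be the amalgamated free product, choose b ∈ A ∖ K and b' ∈ B ∖ K, and set a = b·b' (computed in G). Then an element g ∈ G has finite order if and only if g lies in (the image of) K or g does not lie in the subgroup K⟨a⟩ of G generated by K and a. Equivalently: every element of G outside K⟨a⟩ has finite order, and an element k·aⁿ of K⟨a⟩ (k ∈ K, n ∈ ℤ) has finite order exactly when n = 0. -/

import Mathlib

open Monoid
open scoped Classical Pointwise

/-- The homomorphism from a group to a monoid sending an index-two subgroup to `1`
and its complement to a fixed involution `e`. -/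
noncomputable def homOfIndexTwo {A M : Type*} [Group A] [Monoid M] (H : Subgroup A) (h : H.index = 2)
    (e : M) (he : e * e = 1) : A →* M where
  toFun x := if x ∈ H then 1 else e
  map_one' := if_pos H.one_mem
  map_mul' x y := by
    show (if x * y ∈ H then (1 : M) else e) = (if x ∈ H then (1:M) else e) * (if y ∈ H then (1:M) else e)
    rw [Subgroup.mul_mem_iff_of_index_two h]
    by_cases hx : x ∈ H <;> by_cases hy : y ∈ H <;>
      simp [hx, hy, he]

theorem homOfIndexTwo_apply {A M : Type*} [Group A] [Monoid M] (H : Subgroup A)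
    (h : H.index = 2) (e : M) (he : e * e = 1) (x : A) :
    homOfIndexTwo H h e he x = if x ∈ H then 1 else e := rfl

/-- The involution `n ↦ -n` of `ℤ`. -/
def negPerm : Equiv.Perm ℤ :=
  ⟨fun n => -n, fun n => -n, fun n => by simp, fun n => by simp⟩

/-- The involution `n ↦ 1 - n` of `ℤ`. -/
def refPerm : Equiv.Perm ℤ :=
  ⟨fun n => 1 - n, fun n => 1 - n, fun n => by simp, fun n => by simp⟩

theorem negPerm_inv : negPerm * negPerm = 1 := by
  ext n; simp [negPerm, Equiv.Perm.mul_apply]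

theorem refPerm_inv : refPerm * refPerm = 1 := by
  ext n; simp [refPerm, Equiv.Perm.mul_apply]

theorem amalgam_torsion_characterization {K : Type*} [Group K] [Finite K]
    {G : Bool → Type*} [∀ i, Group (G i)] (φ : ∀ i, K →* G i)
    (hinj : ∀ i, Function.Injective (φ i))
    (hidx : ∀ i, (φ i).range.index = 2)
    (b : G true) (hb : b ∉ (φ true).range)
    (b' : G false) (hb' : b' ∉ (φ false).range)
    (a : PushoutI φ)
    (ha : a = PushoutI.of (φ := φ) true b * PushoutI.of (φ := φ) false b') :
    (∀ g : PushoutI φ,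
      IsOfFinOrder g ↔
        (g ∈ (PushoutI.base φ : K →* PushoutI φ).range ∨
          g ∉ (PushoutI.base φ : K →* PushoutI φ).range ⊔ Subgroup.zpowers a)) ∧
    (∀ (k : K) (n : ℤ), IsOfFinOrder (PushoutI.base φ k * a ^ n) ↔ n = 0) := by
  classical
  set N : Subgroup (PushoutI φ) := (PushoutI.base φ : K →* PushoutI φ).range with hN
  -- every conjugate of an element of the range of `φ i` is in the range
  have hconjR : ∀ (i : Bool) (x : G i) (k : K), x * φ i k * x⁻¹ ∈ (φ i).range := by
    intro i x k
    rw [Subgroup.mul_mem_iff_of_index_two (hidx i), Subgroup.mul_mem_iff_of_index_two (hidx i),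
      Subgroup.inv_mem_iff]
    have : φ i k ∈ (φ i).range := ⟨k, rfl⟩
    tauto
  -- N is normal
  have hNnorm : N.Normal := by
    constructor
    rintro _ ⟨k, rfl⟩ g
    induction g using PushoutI.induction_on generalizing k with
    | of i x =>
        have h1 : PushoutI.of (φ := φ) i x * PushoutI.base φ k * (PushoutI.of (φ := φ) i x)⁻¹
            = PushoutI.of (φ := φ) i (x * φ i k * x⁻¹) := by
          rw [← PushoutI.of_apply_eq_base φ i k, ← map_inv, ← map_mul, ← map_mul]
        rw [h1]
        obtain ⟨k', hk'⟩ := hconjR i x k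
        rw [← hk', PushoutI.of_apply_eq_base]
        exact ⟨k', rfl⟩
    | base h =>
        refine ⟨h * k * h⁻¹, ?_⟩
        simp [map_mul, map_inv]
    | mul x y ihx ihy =>
        obtain ⟨k', hk'⟩ := ihy k
        have : x * y * PushoutI.base φ k * (x * y)⁻¹
            = x * (y * PushoutI.base φ k * y⁻¹) * x⁻¹ := by group
        rw [this, ← hk']
        exact ihx k'
  haveI := hNnorm
  -- the homomorphism to Perm ℤ
  set e : ∀ i : Bool, Equiv.Perm ℤ := fun i => if i then negPerm else refPerm with he
  have hee : ∀ i, e i * e i = 1 := by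
    intro i; cases i
    · simpa [he] using refPerm_inv
    · simpa [he] using negPerm_inv
  set f : ∀ i : Bool, G i →* Equiv.Perm ℤ :=
    fun i => homOfIndexTwo (φ i).range (hidx i) (e i) (hee i) with hf
  have hfcomp : ∀ i, (f i).comp (φ i) = (1 : K →* Equiv.Perm ℤ) := by
    intro i; ext k
    simp [hf, homOfIndexTwo_apply, show φ i k ∈ (φ i).range from ⟨k, rfl⟩]
  set θ : PushoutI φ →* Equiv.Perm ℤ := PushoutI.lift f 1 hfcomp with hθ
  have hθbase : ∀ k : K, θ (PushoutI.base φ k) = 1 := by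
    intro k; simp [hθ]
  have hθa1 : ∀ x : ℤ, θ a x = x - 1 := by
    intro x
    rw [ha, map_mul]
    simp only [hθ, PushoutI.lift_of]
    rw [hf]
    simp only [homOfIndexTwo_apply, if_neg hb, if_neg hb']
    simp only [he, if_pos rfl, if_neg (by simp : ¬(false = true))]
    show negPerm (refPerm x) = x - 1
    simp only [negPerm, refPerm, Equiv.coe_fn_mk]
    ring
  have hθainv : ∀ x : ℤ, (θ a)⁻¹ x = x + 1 := by
    intro x
    have h1 : θ a (x + 1) = x := by rw [hθa1]; ring
    calc (θ a)⁻¹ x = (θ a)⁻¹ (θ a (x+1)) := by rw [h1]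
    _ = x + 1 := by simp
  have hθan : ∀ (m : ℤ) (x : ℤ), ((θ a) ^ m) x = x - m := by
    intro m
    induction m using Int.induction_on with
    | zero => simp
    | succ n ih =>
        intro x
        rw [show ((n : ℤ) + 1) = (n + 1 : ℤ) from rfl, zpow_add_one, Equiv.Perm.mul_apply,
          hθa1, ih]
        ring
    | pred n ih =>
        intro x
        rw [zpow_sub_one, Equiv.Perm.mul_apply, hθainv, ih]
        ring
  -- powers of θ a are torsion only when trivial
  have hθtor : ∀ n : ℤ, IsOfFinOrder ((θ a) ^ n) → n = 0 := by
    intro n hn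
    obtain ⟨M, hM, hM1⟩ := isOfFinOrder_iff_pow_eq_one.1 hn
    have : ((θ a) ^ (n * (M : ℤ))) = 1 := by
      rw [zpow_mul, zpow_natCast, hM1]
    have h0 : ((θ a) ^ (n * (M : ℤ))) (0 : ℤ) = 0 := by rw [this]; rfl
    rw [hθan] at h0
    have : n * (M : ℤ) = 0 := by omega
    rcases mul_eq_zero.1 this with h | h
    · exact h
    · exfalso; omega
  -- basics about the quotient
  set q : PushoutI φ →* PushoutI φ ⧸ N := QuotientGroup.mk' N with hq
  have hker : ∀ x : PushoutI φ, q x = 1 ↔ x ∈ N := fun x => QuotientGroup.eq_one_iff x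
  set A : PushoutI φ ⧸ N := q a with hA
  set B : PushoutI φ ⧸ N := q (PushoutI.of (φ := φ) true b) with hB
  set B' : PushoutI φ ⧸ N := q (PushoutI.of (φ := φ) false b') with hB'
  have hBB : B * B = 1 := by
    rw [hB, ← map_mul, hker, ← map_mul]
    obtain ⟨k, hk⟩ := Subgroup.mul_self_mem_of_index_two (hidx true) b
    exact ⟨k, by rw [← PushoutI.of_apply_eq_base φ true, hk]⟩
  have hB'B' : B' * B' = 1 := by
    rw [hB', ← map_mul, hker, ← map_mul]
    obtain ⟨k, hk⟩ := Subgroup.mul_self_mem_of_index_two (hidx false) b'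
    exact ⟨k, by rw [← PushoutI.of_apply_eq_base φ false, hk]⟩
  have hABB' : A = B * B' := by rw [hA, hB, hB', ha, map_mul]
  have hBinv : B⁻¹ = B := by
    rw [inv_eq_iff_mul_eq_one]; exact hBB
  have hconj : B * A * B⁻¹ = A⁻¹ := by
    rw [hABB', hBinv]
    calc B * (B * B') * B = (B * B) * (B' * B) := by group
    _ = B' * B := by rw [hBB, one_mul]
    _ = (B * B')⁻¹ := by
        rw [mul_inv_rev, hBinv, inv_eq_iff_mul_eq_one.2 hB'B']
  have hconjn : ∀ m : ℤ, B * A ^ m * B⁻¹ = A ^ (-m) := by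
    intro m
    calc B * A ^ m * B⁻¹ = (MulAut.conj B) (A ^ m) := by simp [MulAut.conj_apply]
    _ = ((MulAut.conj B) A) ^ m := by rw [map_zpow]
    _ = (A⁻¹) ^ m := by rw [MulAut.conj_apply, hconj]
    _ = A ^ (-m) := by rw [inv_zpow, zpow_neg]
  have hBAn : ∀ m : ℤ, B * A ^ m = A ^ (-m) * B := by
    intro m
    calc B * A ^ m = (B * A ^ m * B⁻¹) * B := by group
    _ = A ^ (-m) * B := by rw [hconjn]
  -- structure of the quotient: every element is A^m or A^m * B
  have hstruct : ∀ g : PushoutI φ, ∃ m : ℤ, q g = A ^ m ∨ q g = A ^ m * B := by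
    intro g
    induction g using PushoutI.induction_on with
    | of i x =>
        cases i with
        | true =>
            by_cases hx : x ∈ (φ true).range
            · obtain ⟨k, hk⟩ := hx
              refine ⟨0, Or.inl ?_⟩
              rw [zpow_zero, hker, ← hk, PushoutI.of_apply_eq_base]
              exact ⟨k, rfl⟩
            · refine ⟨0, Or.inr ?_⟩
              have hxb : x * b⁻¹ ∈ (φ true).range := by
                rw [Subgroup.mul_mem_iff_of_index_two (hidx true), Subgroup.inv_mem_iff]
                tauto
              obtain ⟨k, hk⟩ := hxb
              have : PushoutI.of (φ := φ) true x
                  = PushoutI.base φ k * PushoutI.of (φ := φ) true b := by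
                rw [← PushoutI.of_apply_eq_base φ true, ← map_mul, hk]
                congr 1; group
              rw [this, map_mul, zpow_zero, one_mul, ← hB]
              have h1 : q (PushoutI.base φ k) = 1 := (hker _).2 ⟨k, rfl⟩
              rw [h1, one_mul]
        | false =>
            by_cases hx : x ∈ (φ false).range
            · obtain ⟨k, hk⟩ := hx
              refine ⟨0, Or.inl ?_⟩
              rw [zpow_zero, hker, ← hk, PushoutI.of_apply_eq_base]
              exact ⟨k, rfl⟩
            · refine ⟨-1, Or.inr ?_⟩
              have hxb : x * b'⁻¹ ∈ (φ false).range := by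
                rw [Subgroup.mul_mem_iff_of_index_two (hidx false), Subgroup.inv_mem_iff]
                tauto
              obtain ⟨k, hk⟩ := hxb
              have : PushoutI.of (φ := φ) false x
                  = PushoutI.base φ k * PushoutI.of (φ := φ) false b' := by
                rw [← PushoutI.of_apply_eq_base φ false, ← map_mul, hk]
                congr 1; group
              rw [this, map_mul]
              have h1 : q (PushoutI.base φ k) = 1 := (hker _).2 ⟨k, rfl⟩
              rw [h1, one_mul, ← hB']
              have : B' = A ^ (-1 : ℤ) * B := by
                have h2 : B * B' = A := hABB'.symm
                have h3 : B' = B⁻¹ * A := by rw [← h2]; group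
                rw [h3, hBinv]
                have := hBAn 1
                rw [zpow_one] at this
                rw [this]
              exact this
    | base h =>
        refine ⟨0, Or.inl ?_⟩
        rw [zpow_zero, hker]
        exact ⟨h, rfl⟩
    | mul x y ihx ihy =>
        obtain ⟨m, hm⟩ := ihx
        obtain ⟨n, hn⟩ := ihy
        rw [map_mul]
        rcases hm with hm | hm <;> rcases hn with hn | hn
        · exact ⟨m + n, Or.inl (by rw [hm, hn, ← zpow_add])⟩
        · exact ⟨m + n, Or.inr (by rw [hm, hn, ← mul_assoc, ← zpow_add])⟩
        · refine ⟨m + (-n), Or.inr ?_⟩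
          rw [hm, hn]
          calc A ^ m * B * A ^ n = A ^ m * (B * A ^ n) := by group
          _ = A ^ m * (A ^ (-n) * B) := by rw [hBAn]
          _ = A ^ (m + -n) * B := by rw [zpow_add]; group
        · refine ⟨m + (-n), Or.inl ?_⟩
          rw [hm, hn]
          calc A ^ m * B * (A ^ n * B) = A ^ m * (B * A ^ n) * B := by group
          _ = A ^ m * (A ^ (-n) * B) * B := by rw [hBAn]
          _ = A ^ (m + -n) * (B * B) := by rw [zpow_add]; group
          _ = A ^ (m + -n) := by rw [hBB, mul_one]
  -- membership in N ⊔ zpowers a from quotient data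
  have hmemH : ∀ (g : PushoutI φ) (m : ℤ), q g = A ^ m → g ∈ N ⊔ Subgroup.zpowers a := by
    intro g m hgm
    have h1 : q (g * a ^ (-m)) = 1 := by
      rw [map_mul, map_zpow, ← hA, hgm, ← zpow_add]
      simp
    have h2 : g * a ^ (-m) ∈ N := (hker _).1 h1
    have h3 : g = (g * a ^ (-m)) * a ^ m := by group
    rw [h3]
    exact mul_mem (Subgroup.mem_sup_left h2)
      (Subgroup.mem_sup_right (Subgroup.zpow_mem_zpowers a m))
  -- torsion of elements of N
  have hNtor : ∀ k : K, IsOfFinOrder (PushoutI.base φ k) :=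
    fun k => (PushoutI.base φ).isOfFinOrder (isOfFinOrder_of_finite k)
  -- part 2
  have part2 : ∀ (k : K) (n : ℤ), IsOfFinOrder (PushoutI.base φ k * a ^ n) ↔ n = 0 := by
    intro k n
    constructor
    · intro h
      have h1 : θ (PushoutI.base φ k * a ^ n) = (θ a) ^ n := by
        rw [map_mul, hθbase, one_mul, map_zpow]
      have h2 : IsOfFinOrder ((θ a) ^ n) := by
        rw [← h1]; exact θ.isOfFinOrder h
      exact hθtor n h2
    · rintro rfl
      simpa using hNtor k
  refine ⟨?_, part2⟩
  intro g
  constructor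
  · intro hfin
    by_cases hgH : g ∈ N ⊔ Subgroup.zpowers a
    · left
      have hgset : g ∈ (N : Set (PushoutI φ)) * (Subgroup.zpowers a : Set (PushoutI φ)) := by
        rw [← Subgroup.normal_mul]; exact hgH
      obtain ⟨x, hx, y, hy, rfl⟩ := hgset
      obtain ⟨k, rfl⟩ := hx
      obtain ⟨m, rfl⟩ := hy
      have hm0 : m = 0 := (part2 k m).1 hfin
      refine ⟨k, ?_⟩
      rw [hm0]
      simp
    · right; exact hgH
  · rintro (⟨k, rfl⟩ | hgH)
    · exact hNtor k
    · -- g is outside N ⊔ zpowers a, hence q g = A^m * B and g² ∈ N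
      obtain ⟨m, hm | hm⟩ := hstruct g
      · exact absurd (hmemH g m hm) hgH
      · have hsq : q (g * g) = 1 := by
          rw [map_mul, hm]
          calc A ^ m * B * (A ^ m * B) = A ^ m * (B * A ^ m) * B := by group
          _ = A ^ m * (A ^ (-m) * B) * B := by rw [hBAn]
          _ = A ^ (m + -m) * (B * B) := by rw [zpow_add]; group
          _ = 1 := by rw [hBB]; simp
        have hgg : g * g ∈ N := (hker _).1 hsq
        obtain ⟨k, hk⟩ := hgg
        have h2 : IsOfFinOrder (g ^ 2) := by
          rw [pow_two, ← hk]; exact hNtor k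
        exact h2.of_pow (by norm_num)
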